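/- Let κ = (κ₁,…,κₙ) ∈ Γ_k with κ₁ ≥ κ₂ ≥ ⋯ ≥ κₙ. Then for any 1 ≤ l < k, σ_l(κ) ≥ κ₁κ₂⋯κ_l. -/

import Mathlib

noncomputable def esymm (n k : ℕ) (κ : Fin n → ℝ) : ℝ :=
  ∑ s ∈ Finset.powersetCard k (Finset.univ : Finset (Fin n)), ∏ i ∈ s, κ i

noncomputable def esymm1 (n m : ℕ) (κ : Fin n → ℝ) (i : Fin n) : ℝ :=
  ∑ s ∈ Finset.powersetCard m ((Finset.univ : Finset (Fin n)).erase i), ∏ j ∈ s, κ j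

noncomputable def esymm2 (n m : ℕ) (κ : Fin n → ℝ) (i j : Fin n) : ℝ :=
  ∑ s ∈ Finset.powersetCard m (((Finset.univ : Finset (Fin n)).erase i).erase j), ∏ l ∈ s, κ l

def GardingCone (n k : ℕ) : Set (Fin n → ℝ) :=
  {κ | ∀ m, 1 ≤ m → m ≤ k → 0 < esymm n m κ}

open Polynomial Finset

set_option linter.unusedVariables false

section EsymAux

set_option linter.unusedSectionVars false
variable {ι : Type*} [DecidableEq ι]

noncomputable def Esym (κ : ι → ℝ) (s : Finset ι) (m : ℕ) : ℝ :=
  ∑ A ∈ s.powersetCard m, ∏ i ∈ A, κ i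

lemma Esym_zero (κ : ι → ℝ) (s : Finset ι) : Esym κ s 0 = 1 := by
  simp [Esym]

lemma Esym_eq_zero (κ : ι → ℝ) {s : Finset ι} {m : ℕ} (h : s.card < m) : Esym κ s m = 0 := by
  simp [Esym, Finset.powersetCard_eq_empty.2 h]

lemma Esym_one (κ : ι → ℝ) (s : Finset ι) : Esym κ s 1 = ∑ i ∈ s, κ i := by
  simp [Esym, Finset.powersetCard_one, Finset.sum_map]

lemma Esym_split (κ : ι → ℝ) {s : Finset ι} {i : ι} (hi : i ∈ s) (m : ℕ) :
    Esym κ s (m+1) = κ i * Esym κ (s.erase i) m + Esym κ (s.erase i) (m+1) := by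
  have hins : s = insert i (s.erase i) := (Finset.insert_erase hi).symm
  rw [Esym]
  conv_lhs => rw [hins]
  rw [Finset.powersetCard_succ_insert (Finset.notMem_erase i s)]
  rw [Finset.sum_union]
  · rw [Finset.sum_image (f := fun A => ∏ j ∈ A, κ j)
      (g := insert i)]
    · rw [add_comm]
      congr 1
      rw [Esym, Finset.mul_sum]
      refine Finset.sum_congr rfl fun A hA => ?_
      rw [Finset.mem_powersetCard] at hA
      have hiA : i ∉ A := fun h => (Finset.notMem_erase i s) (hA.1 h)
      rw [Finset.prod_insert hiA]
    · intro A hA B hB hAB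
      rw [Finset.mem_coe, Finset.mem_powersetCard] at hA hB
      have hiA : i ∉ A := fun h => (Finset.notMem_erase i s) (hA.1 h)
      have hiB : i ∉ B := fun h => (Finset.notMem_erase i s) (hB.1 h)
      rw [← Finset.erase_insert hiA, ← Finset.erase_insert hiB, hAB]
  · rw [Finset.disjoint_right]
    rintro A hA hA'
    rw [Finset.mem_image] at hA
    obtain ⟨B, _, rfl⟩ := hA
    rw [Finset.mem_powersetCard] at hA'
    exact (Finset.notMem_erase i s) (hA'.1 (Finset.mem_insert_self i B))

lemma Esym_pos_of_pos {κ : ι → ℝ} {s : Finset ι} {m : ℕ} (hpos : ∀ i ∈ s, 0 < κ i)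
    (hm : m ≤ s.card) : 0 < Esym κ s m := by
  apply Finset.sum_pos
  · intro A hA
    rw [Finset.mem_powersetCard] at hA
    exact Finset.prod_pos fun i hi => hpos i (hA.1 hi)
  · obtain ⟨A, hA1, hA2⟩ := Finset.exists_subset_card_eq hm
    exact ⟨A, Finset.mem_powersetCard.2 ⟨hA1, hA2⟩⟩


lemma card_filter_superset {s T : Finset ι} {m : ℕ} (hT : T ⊆ s) (hTm : T.card ≤ m) :
    ((s.powersetCard m).filter (fun A => T ⊆ A)).card = (s.card - T.card).choose (m - T.card) := by
  rw [← Finset.card_sdiff_of_subset hT, ← Finset.card_powersetCard]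
  apply Finset.card_bij' (fun A _ => A \ T) (fun B _ => B ∪ T)
  · intro A hA
    rw [Finset.mem_filter, Finset.mem_powersetCard] at hA
    rw [Finset.mem_powersetCard]
    exact ⟨Finset.sdiff_subset_sdiff hA.1.1 (le_refl T), by rw [Finset.card_sdiff_of_subset hA.2, hA.1.2]⟩
  · intro B hB
    rw [Finset.mem_powersetCard] at hB
    have hBs : B ⊆ s \ T := hB.1
    have hdisj : Disjoint B T := (Finset.subset_sdiff.1 hBs).2
    rw [Finset.mem_filter, Finset.mem_powersetCard]
    refine ⟨⟨Finset.union_subset ((Finset.subset_sdiff.1 hBs).1) hT, ?_⟩, Finset.subset_union_right⟩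
    rw [Finset.card_union_of_disjoint hdisj, hB.2]
    omega
  · intro A hA
    rw [Finset.mem_filter] at hA
    exact Finset.sdiff_union_of_subset hA.2
  · intro B hB
    rw [Finset.mem_powersetCard] at hB
    exact Finset.union_sdiff_cancel_right (Finset.subset_sdiff.1 hB.1).2

lemma card_filter_superset_zero {s T : Finset ι} {m : ℕ} (hTm : m < T.card) :
    ((s.powersetCard m).filter (fun A => T ⊆ A)).card = 0 := by
  rw [Finset.card_eq_zero, Finset.filter_eq_empty_iff]
  intro A hA
  rw [Finset.mem_powersetCard] at hA
  intro hTA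
  have := Finset.card_le_card hTA
  omega

lemma Esym_shift (κ : ι → ℝ) (s : Finset ι) (t : ℝ) {m : ℕ} (hm : m ≤ s.card) :
    Esym (fun i => κ i + t) s m
      = ∑ j ∈ Finset.range (m+1),
          (((s.card - j).choose (m - j) : ℕ) : ℝ) * Esym κ s j * t^(m-j) := by
  have step1 : Esym (fun i => κ i + t) s m
      = ∑ A ∈ s.powersetCard m, ∑ T ∈ A.powerset, (∏ i ∈ T, κ i) * t^(m - T.card) := by
    refine Finset.sum_congr rfl fun A hA => ?_
    rw [Finset.mem_powersetCard] at hA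
    rw [Finset.prod_add]
    refine Finset.sum_congr rfl fun T hT => ?_
    rw [Finset.mem_powerset] at hT
    rw [Finset.prod_const, Finset.card_sdiff_of_subset hT, hA.2]
  have hcomm : ∀ (A T : Finset ι), A ∈ s.powersetCard m ∧ T ∈ A.powerset ↔
      A ∈ (s.powersetCard m).filter (fun A => T ⊆ A) ∧ T ∈ s.powerset := by
    intro A T
    rw [Finset.mem_filter, Finset.mem_powerset, Finset.mem_powerset]
    constructor
    · rintro ⟨hA, hTA⟩
      exact ⟨⟨hA, hTA⟩, hTA.trans (Finset.mem_powersetCard.1 hA).1⟩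
    · rintro ⟨⟨hA, hTA⟩, _⟩
      exact ⟨hA, hTA⟩
  rw [step1, Finset.sum_comm' hcomm]
  have step2 : ∀ T ∈ s.powerset,
      (∑ A ∈ (s.powersetCard m).filter (fun A => T ⊆ A), (∏ i ∈ T, κ i) * t^(m - T.card))
      = (((s.powersetCard m).filter (fun A => T ⊆ A)).card : ℝ)
          * ((∏ i ∈ T, κ i) * t^(m - T.card)) := by
    intro T _
    rw [Finset.sum_const, nsmul_eq_mul]
  rw [Finset.sum_congr rfl step2, Finset.sum_powerset]
  rw [← Finset.sum_subset (Finset.range_subset_range.2 (by omega : m + 1 ≤ s.card + 1))]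
  · refine Finset.sum_congr rfl fun j hj => ?_
    rw [Finset.mem_range] at hj
    rw [Esym, Finset.mul_sum, Finset.sum_mul]
    refine Finset.sum_congr rfl fun T hT => ?_
    rw [Finset.mem_powersetCard] at hT
    rw [card_filter_superset hT.1 (by omega : T.card ≤ m), hT.2]
    ring
  · intro j hj hj'
    rw [Finset.mem_range] at hj hj'
    apply Finset.sum_eq_zero
    intro T hT
    rw [Finset.mem_powersetCard] at hT
    rw [card_filter_superset_zero (by omega : m < T.card)]
    simp


def RealRooted (q : ℝ[X]) : Prop := Multiset.card q.roots = q.natDegree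

lemma realRooted_derivative {q : ℝ[X]} (hq : RealRooted q) : RealRooted (derivative q) := by
  by_cases h0 : q.natDegree = 0
  · have hd : derivative q = 0 := by
      conv_lhs => rw [Polynomial.eq_C_of_natDegree_eq_zero h0]
      simp
    rw [RealRooted, hd]
    simp
  · have h1 := Polynomial.card_roots_le_derivative q
    have h2 := Polynomial.card_roots' (derivative q)
    have h3 := Polynomial.natDegree_derivative_le q
    rw [RealRooted] at hq ⊢
    omega

lemma realRooted_natDegree_derivative {q : ℝ[X]} (hq : RealRooted q) (h0 : q.natDegree ≠ 0) :
    (derivative q).natDegree = q.natDegree - 1 := by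
  have h1 := Polynomial.card_roots_le_derivative q
  have h2 := Polynomial.card_roots' (derivative q)
  have h3 := Polynomial.natDegree_derivative_le q
  rw [RealRooted] at hq
  omega

lemma realRooted_iterate {q : ℝ[X]} (hq : RealRooted q) (k : ℕ) :
    RealRooted (derivative^[k] q) ∧ (derivative^[k] q).natDegree = q.natDegree - k := by
  induction k with
  | zero => simpa using hq
  | succ d hd =>
    rw [Function.iterate_succ_apply']
    refine ⟨realRooted_derivative hd.1, ?_⟩
    by_cases h0 : (derivative^[d] q).natDegree = 0
    · have hd0 : derivative (derivative^[d] q) = 0 := by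
        conv_lhs => rw [Polynomial.eq_C_of_natDegree_eq_zero h0]
        simp
      rw [hd0]
      simp only [natDegree_zero]
      omega
    · rw [realRooted_natDegree_derivative hd.1 h0, hd.2]
      omega

lemma coeff_sq_invariant : ∀ (R : Multiset ℝ), (0:ℝ) ∉ R → ∀ c : ℝ,
    ((C c * (R.map fun a => X - C a).prod).coeff 1)^2
      - 2 * ((C c * (R.map fun a => X - C a).prod).coeff 0)
          * ((C c * (R.map fun a => X - C a).prod).coeff 2)
    = ((C c * (R.map fun a => X - C a).prod).coeff 0)^2 * (R.map fun a => (a⁻¹)^2).sum := by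
  intro R
  refine Multiset.induction_on R ?_ ?_
  · intro _ c
    simp [Polynomial.coeff_C]
  · intro a R ih hR c
    have ha : a ≠ 0 := fun h => hR (h ▸ Multiset.mem_cons_self a R)
    have hR' : (0:ℝ) ∉ R := fun h => hR (Multiset.mem_cons_of_mem h)
    have IH := ih hR' c
    obtain ⟨q, hqdef⟩ : ∃ q : ℝ[X], C c * (R.map fun a => X - C a).prod = q := ⟨_, rfl⟩
    rw [hqdef] at IH
    have hrw : C c * (((a ::ₘ R).map fun a => X - C a).prod) = (X - C a) * q := by
      rw [Multiset.map_cons, Multiset.prod_cons, ← hqdef]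
      ring
    rw [hrw]
    have e0 : ((X - C a) * q).coeff 0 = -a * q.coeff 0 := by
      rw [Polynomial.mul_coeff_zero]
      simp
    have hXq : ∀ k : ℕ, ((X - C a) * q).coeff (k+1) = q.coeff k - a * q.coeff (k+1) := by
      intro k
      have hh : (X - C a) * q = q * X - C a * q := by ring
      rw [hh, Polynomial.coeff_sub, Polynomial.coeff_mul_X, Polynomial.coeff_C_mul]
    have e1 : ((X - C a) * q).coeff 1 = q.coeff 0 - a * q.coeff 1 := hXq 0
    have e2 : ((X - C a) * q).coeff 2 = q.coeff 1 - a * q.coeff 2 := hXq 1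
    rw [e0, e1, e2, Multiset.map_cons, Multiset.sum_cons]
    have key : a^2 * (a⁻¹)^2 = 1 := by field_simp
    linear_combination a^2 * IH - (q.coeff 0)^2 * key

lemma laguerre {q : ℝ[X]} (hq : RealRooted q) (h0 : q.coeff 0 ≠ 0) :
    2 * (q.coeff 0) * (q.coeff 2) ≤ (q.coeff 1)^2 := by
  have heq := Polynomial.C_leadingCoeff_mul_prod_multiset_X_sub_C hq
  have hzero : (0:ℝ) ∉ q.roots := by
    intro h
    have h2 := Polynomial.isRoot_of_mem_roots h
    rw [Polynomial.IsRoot, ← Polynomial.coeff_zero_eq_eval_zero] at h2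
    exact h0 h2
  have inv := coeff_sq_invariant q.roots hzero q.leadingCoeff
  rw [heq] at inv
  have hs : 0 ≤ (q.roots.map fun a => (a⁻¹)^2).sum :=
    Multiset.sum_nonneg (by intro x hx; obtain ⟨a, _, rfl⟩ := Multiset.mem_map.1 hx; positivity)
  nlinarith [sq_nonneg (q.coeff 0)]

lemma newton_contra (κ : ι → ℝ) (s : Finset ι) (m : ℕ) (hm : 1 ≤ m) (hcard : m + 1 ≤ s.card)
    (h0 : 0 < Esym κ s (m-1)) (h1 : Esym κ s m = 0) (h2 : 0 < Esym κ s (m+1)) : False := by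
  have hpne : (∏ i ∈ s, (X + C (κ i))) ≠ 0 :=
    Finset.prod_ne_zero_iff.2 fun i _ => Polynomial.X_add_C_ne_zero (κ i)
  have hdeg : (∏ i ∈ s, (X + C (κ i))).natDegree = s.card := by
    rw [Polynomial.natDegree_prod _ _ (fun i _ => Polynomial.X_add_C_ne_zero (κ i))]
    simp [Polynomial.natDegree_X_add_C]
  have hroots : Multiset.card (∏ i ∈ s, (X + C (κ i))).roots = s.card := by
    rw [Polynomial.roots_prod _ _ hpne, Multiset.card_bind]
    have hone : ∀ i ∈ s.val, (Multiset.card ∘ fun i => (X + C (κ i)).roots) i = 1 := by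
      intro i _
      simp only [Function.comp_apply]
      rw [show (X + C (κ i)) = X - C (-(κ i)) by rw [map_neg, sub_neg_eq_add],
        Polynomial.roots_X_sub_C, Multiset.card_singleton]
    rw [Multiset.map_congr rfl hone, Multiset.map_const', Multiset.sum_replicate, smul_eq_mul,
      mul_one, Finset.card]
  have hRR : RealRooted (∏ i ∈ s, (X + C (κ i))) := by
    rw [RealRooted, hroots, hdeg]
  have hcoeff : ∀ r : ℕ, r ≤ s.card →
      (∏ i ∈ s, (X + C (κ i))).coeff r = Esym κ s (s.card - r) := fun r hr =>
    Finset.prod_X_add_C_coeff s κ hr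
  obtain ⟨hRRq, hdegq⟩ := realRooted_iterate hRR (s.card - (m+1))
  set D := s.card - (m+1) with hD
  set q := derivative^[D] (∏ i ∈ s, (X + C (κ i))) with hq
  have hcq : ∀ j : ℕ, j ≤ 2 →
      q.coeff j = ((j + D).descFactorial D : ℝ) * Esym κ s (m + 1 - j) := by
    intro j hj
    rw [hq, Polynomial.coeff_iterate_derivative, hcoeff (j + D) (by omega),
      nsmul_eq_mul]
    congr 2
    omega
  have hdf : ∀ j : ℕ, 0 < ((j + D).descFactorial D : ℝ) := by
    intro j
    have : (j + D).descFactorial D ≠ 0 := by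
      rw [Ne, Nat.descFactorial_eq_zero_iff_lt]
      omega
    positivity
  have hc0 : 0 < q.coeff 0 := by
    rw [hcq 0 (by omega)]
    simpa using mul_pos (hdf 0) h2
  have hc1 : q.coeff 1 = 0 := by
    rw [hcq 1 (by omega), show m + 1 - 1 = m from rfl, h1, mul_zero]
  have hc2 : 0 < q.coeff 2 := by
    rw [hcq 2 (by omega)]
    have : m + 1 - 2 = m - 1 := by omega
    rw [this]
    exact mul_pos (hdf 2) h0
  have := laguerre hRRq (ne_of_gt hc0)
  rw [hc1] at this
  nlinarith


lemma Esym_shift_pos {κ : ι → ℝ} {s : Finset ι} {m : ℕ} {t : ℝ}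
    (hm : m ≤ s.card) (hpos : ∀ j, 1 ≤ j → j ≤ m → 0 < Esym κ s j) (ht : 0 ≤ t) :
    0 < Esym (fun i => κ i + t) s m := by
  rw [Esym_shift κ s t hm]
  have hE : ∀ j, j ≤ m → 0 ≤ Esym κ s j := by
    intro j hj
    rcases Nat.eq_zero_or_pos j with h | h
    · rw [h, Esym_zero]; norm_num
    · exact le_of_lt (hpos j h hj)
  apply Finset.sum_pos'
  · intro j hj
    rw [Finset.mem_range] at hj
    have := hE j (by omega)
    positivity
  · refine ⟨m, Finset.self_mem_range_succ m, ?_⟩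
    have hEm : 0 < Esym κ s m := by
      rcases Nat.eq_zero_or_pos m with h | h
      · subst h; rw [Esym_zero]; norm_num
      · exact hpos m h (le_refl m)
    simpa [Nat.sub_self] using hEm

lemma Esym_erase_pos {κ : ι → ℝ} {s : Finset ι} {k : ℕ} (hk : k ≤ s.card)
    (hΓ : ∀ m, 1 ≤ m → m ≤ k → 0 < Esym κ s m) {i : ι} (hi : i ∈ s) :
    ∀ m, 1 ≤ m → m ≤ k - 1 → 0 < Esym κ (s.erase i) m := by
  intro m
  induction m using Nat.strong_induction_on with
  | _ m IH =>
  intro hm1 hmk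
  by_contra hcon
  push_neg at hcon
  have hcard_erase : (s.erase i).card = s.card - 1 := Finset.card_erase_of_mem hi
  have hmcard : m ≤ (s.erase i).card := by omega
  -- the deformation function
  set f : ℝ → ℝ := fun t => Esym (fun j => κ j + t) (s.erase i) m with hf
  have hcont : Continuous f := by
    apply continuous_finset_sum
    intro A _
    exact continuous_finset_prod _ fun j _ => (continuous_const.add continuous_id)
  have hf0 : f 0 ≤ 0 := by
    have : (fun j => κ j + (0:ℝ)) = κ := by funext j; ring
    rw [hf]
    simpa [this] using hcon
  set T : ℝ := 1 + ∑ j ∈ s, |κ j| with hT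
  have hTpos : 0 ≤ T := by
    have : 0 ≤ ∑ j ∈ s, |κ j| := Finset.sum_nonneg fun j _ => abs_nonneg _
    rw [hT]; linarith
  have hfT : 0 < f T := by
    rw [hf]
    apply Esym_pos_of_pos _ hmcard
    intro j hj
    have hjs : j ∈ s := Finset.mem_of_mem_erase hj
    have h1 : |κ j| ≤ ∑ j ∈ s, |κ j| :=
      Finset.single_le_sum (fun x _ => abs_nonneg (κ x)) hjs
    have h2 : -κ j ≤ |κ j| := neg_le_abs (κ j)
    rw [hT]
    linarith
  obtain ⟨t, htIcc, htf⟩ : ∃ t ∈ Set.Icc (0:ℝ) T, f t = 0 := by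
    have hsub := intermediate_value_Icc hTpos hcont.continuousOn
    have h0mem : (0:ℝ) ∈ Set.Icc (f 0) (f T) := ⟨hf0, le_of_lt hfT⟩
    obtain ⟨t, ht1, ht2⟩ := hsub h0mem
    exact ⟨t, ht1, ht2⟩
  have ht0 : 0 ≤ t := htIcc.1
  set ν : ι → ℝ := fun j => κ j + t with hν
  -- E_{m-1}(ν, erase) > 0
  have hEm1 : 0 < Esym ν (s.erase i) (m-1) := by
    apply Esym_shift_pos (by omega : m - 1 ≤ (s.erase i).card) _ ht0
    intro j hj1 hj2
    exact IH j (by omega) hj1 (by omega)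
  -- E_{m+1}(ν, s) > 0
  have hEs : 0 < Esym ν s (m+1) := by
    apply Esym_shift_pos (by omega : m + 1 ≤ s.card) _ ht0
    intro j hj1 hj2
    exact hΓ j hj1 (by omega)
  -- split
  have hsplit : Esym ν s (m+1) = ν i * Esym ν (s.erase i) m + Esym ν (s.erase i) (m+1) := by
    have := Esym_split ν hi m
    exact this
  have hEνm : Esym ν (s.erase i) m = 0 := htf
  have hEm2 : 0 < Esym ν (s.erase i) (m+1) := by
    rw [hsplit, hEνm, mul_zero, zero_add] at hEs
    exact hEs
  -- contradiction
  rcases le_or_gt (m+1) (s.erase i).card with hle | hlt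
  · exact newton_contra ν (s.erase i) m hm1 hle hEm1 hEνm hEm2
  · rw [Esym_eq_zero ν hlt] at hEm2
    exact lt_irrefl 0 hEm2

end EsymAux

def SA (n a : ℕ) : Finset (Fin n) := Finset.univ.filter (fun i : Fin n => a ≤ (i:ℕ))

lemma SA_zero (n : ℕ) : SA n 0 = Finset.univ := by
  ext i; simp [SA]

lemma mem_SA {n a : ℕ} (ha : a < n) : (⟨a, ha⟩ : Fin n) ∈ SA n a := by
  simp [SA]

lemma SA_erase {n a : ℕ} (ha : a < n) : (SA n a).erase ⟨a, ha⟩ = SA n (a+1) := by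
  ext i
  simp [SA, Fin.ext_iff]
  omega

lemma card_SA (n : ℕ) : ∀ a, (SA n a).card = n - a := by
  intro a
  induction a with
  | zero => rw [SA_zero]; simp
  | succ a IH =>
    by_cases ha : a < n
    · rw [← SA_erase ha, Finset.card_erase_of_mem (mem_SA ha), IH]
      omega
    · have h1 : SA n (a+1) = ∅ := by
        ext i
        simp only [SA, Finset.mem_filter, Finset.mem_univ, true_and, Finset.notMem_empty,
          iff_false]
        omega
      rw [h1]
      simp
      omega

theorem esymm_lower_bound (n k : ℕ) (hk : 1 ≤ k) (hkn : k ≤ n)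
    (κ : Fin n → ℝ) (hκ : κ ∈ GardingCone n k) (hdec : Antitone κ)
    (l : ℕ) (hl : 1 ≤ l) (hlk : l < k) :
    esymm n l κ ≥ ∏ i ∈ Finset.univ.filter (fun i : Fin n => (i : ℕ) < l), κ i := by
  have hbridge : ∀ m, esymm n m κ = Esym κ Finset.univ m := fun m => rfl
  have hG : ∀ a, a < k → ∀ m, 1 ≤ m → m ≤ k - a → 0 < Esym κ (SA n a) m := by
    intro a
    induction a with
    | zero =>
      intro _ m h1 h2
      rw [SA_zero]
      rw [← hbridge m]
      exact hκ m h1 (by omega)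
    | succ a IH =>
      intro hak m h1 h2
      have han : a < n := by omega
      rw [← SA_erase han]
      refine Esym_erase_pos (k := k - a) ?_ (IH (by omega)) (mem_SA han) m h1 (by omega)
      rw [card_SA]
      omega
  have hκpos : ∀ a, (ha : a < k) → 0 < κ ⟨a, lt_of_lt_of_le ha hkn⟩ := by
    intro a ha
    by_contra hle
    push_neg at hle
    have h1 : 0 < Esym κ (SA n a) 1 := hG a ha 1 le_rfl (by omega)
    rw [Esym_one] at h1
    have h2 : ∑ i ∈ SA n a, κ i ≤ 0 := by
      apply Finset.sum_nonpos
      intro i hi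
      have hai : a ≤ (i : ℕ) := by
        simpa [SA] using hi
      have : κ i ≤ κ ⟨a, lt_of_lt_of_le ha hkn⟩ := hdec (by simpa [Fin.le_def] using hai)
      linarith
    linarith
  have hmain : ∀ l a, a + l < k →
      (∏ i ∈ Finset.univ.filter (fun i : Fin n => a ≤ (i:ℕ) ∧ (i:ℕ) < a + l), κ i)
        ≤ Esym κ (SA n a) l := by
    intro l
    induction l with
    | zero =>
      intro a _
      rw [Esym_zero]
      have hempty : Finset.univ.filter (fun i : Fin n => a ≤ (i:ℕ) ∧ (i:ℕ) < a + 0) = ∅ := by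
        apply Finset.filter_false_of_mem
        intro i _
        omega
      rw [hempty, Finset.prod_empty]
    | succ l IH =>
      intro a hak
      have han : a < n := by omega
      have hsplit := Esym_split κ (mem_SA han) l
      rw [SA_erase han] at hsplit
      have hpos2 : 0 < Esym κ (SA n (a+1)) (l+1) := hG (a+1) (by omega) (l+1) (by omega) (by omega)
      have hIH := IH (a+1) (by omega)
      have hka := hκpos a (by omega)
      have hprod : Finset.univ.filter (fun i : Fin n => a ≤ (i:ℕ) ∧ (i:ℕ) < a + (l+1))
          = insert ⟨a, han⟩
              (Finset.univ.filter (fun i : Fin n => a+1 ≤ (i:ℕ) ∧ (i:ℕ) < (a+1) + l)) := by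
        ext i
        simp only [Finset.mem_filter, Finset.mem_univ, true_and, Finset.mem_insert, Fin.ext_iff]
        omega
      rw [hprod, Finset.prod_insert (by simp)]
      have hmul := mul_le_mul_of_nonneg_left hIH (le_of_lt hka)
      rw [hsplit]
      linarith
  have hres := hmain l 0 (by omega)
  rw [ge_iff_le, hbridge l]
  have hset : Finset.univ.filter (fun i : Fin n => (i : ℕ) < l)
      = Finset.univ.filter (fun i : Fin n => 0 ≤ (i:ℕ) ∧ (i:ℕ) < 0 + l) := by
    ext i
    simp
  rw [hset]
  rw [SA_zero n] at hres
  exact hres
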